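/- Let A, B ∈ ℝ^{n×n} be positive semidefinite. Then rank(B) = rank(√A·B·√A) + dim(range(B) ∩ ker(A)), where dim denotes the dimension of the subspace of ℝⁿ. (Equivalently, the rank of the A-Schur complement of B equals the dimension of range(B) ∩ ker(A), which equals rank(B) − rank(√A·B·√A).) -/

import Mathlib

open Matrix

/-- The positive semidefinite square root of a psd matrix (junk value `0` otherwise). -/
noncomputable def psdSqrt {n : ℕ} (M : Matrix (Fin n) (Fin n) ℝ) : Matrix (Fin n) (Fin n) ℝ :=
  letI := Classical.propDecidable M.PosSemidef
  if h : M.PosSemidef then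
    h.1.eigenvectorUnitary.1 * diagonal ((↑) ∘ (√·) ∘ h.1.eigenvalues) *
      (star h.1.eigenvectorUnitary : Matrix (Fin n) (Fin n) ℝ) else 0

/-- `trace √(√A·B·√A)`. -/
noncomputable def sqrtTr {n : ℕ} (A B : Matrix (Fin n) (Fin n) ℝ) : ℝ :=
  (psdSqrt (psdSqrt A * B * psdSqrt A)).trace

/-- `T` is an optimal transport matrix from `A` to `B`. -/
def IsOT {n : ℕ} (A B T : Matrix (Fin n) (Fin n) ℝ) : Prop :=
  T * A * Tᵀ = B ∧ (A * T).trace = sqrtTr A B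

/-- Squared Bures–Wasserstein distance. -/
noncomputable def W2sq {n : ℕ} (A B : Matrix (Fin n) (Fin n) ℝ) : ℝ :=
  A.trace + B.trace - 2 * sqrtTr A B

section Aux

variable {n : ℕ}

lemma psdSqrt_posSemidef {M : Matrix (Fin n) (Fin n) ℝ} (h : M.PosSemidef) :
    (psdSqrt M).PosSemidef := by
  rw [psdSqrt, dif_pos h]
  have hD : (diagonal ((↑) ∘ (√·) ∘ h.1.eigenvalues) : Matrix (Fin n) (Fin n) ℝ).PosSemidef :=
    posSemidef_diagonal_iff.2 (fun i => by simp [Real.sqrt_nonneg])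
  simpa [star_eq_conjTranspose] using hD.mul_mul_conjTranspose_same h.1.eigenvectorUnitary.1

lemma psdSqrt_mul_self {M : Matrix (Fin n) (Fin n) ℝ} (h : M.PosSemidef) :
    psdSqrt M * psdSqrt M = M := by
  rw [psdSqrt, dif_pos h]
  conv_rhs => rw [h.1.spectral_theorem, Unitary.conjStarAlgAut_apply]
  have hU : (star h.1.eigenvectorUnitary.1 : Matrix (Fin n) (Fin n) ℝ) *
      h.1.eigenvectorUnitary.1 = 1 := Unitary.coe_star_mul_self _
  simp only [mul_assoc, Unitary.coe_star]
  rw [← mul_assoc (star _) (h.1.eigenvectorUnitary.1), hU, one_mul, ← mul_assoc (diagonal _),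
    diagonal_mul_diagonal]
  congr 2
  congr 1
  funext i
  simp [Real.mul_self_sqrt (h.eigenvalues_nonneg i)]

/-- transpose of a real hermitian matrix is itself. -/
lemma transpose_eq_of_psd {S : Matrix (Fin n) (Fin n) ℝ} (hS : S.PosSemidef) : Sᵀ = S := by
  rw [← conjTranspose_eq_transpose_of_trivial]; exact hS.isHermitian.eq

/-- kernel of the square of a psd matrix equals its kernel. -/
lemma ker_sq_psd {S : Matrix (Fin n) (Fin n) ℝ} (hS : S.PosSemidef) :
    LinearMap.ker (S * S).mulVecLin = LinearMap.ker S.mulVecLin := by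
  ext x
  simp only [LinearMap.mem_ker, mulVecLin_apply]
  constructor
  · intro h
    have h1 : x ⬝ᵥ (S * S) *ᵥ x = 0 := by rw [h, dotProduct_zero]
    rw [← mulVec_mulVec, dotProduct_mulVec, ← mulVec_transpose, transpose_eq_of_psd hS] at h1
    exact dotProduct_self_eq_zero.mp h1
  · intro h
    rw [← mulVec_mulVec, h, mulVec_zero]

lemma finrank_map_add_inf_ker (f : (Fin n → ℝ) →ₗ[ℝ] (Fin n → ℝ)) (W : Submodule ℝ (Fin n → ℝ)) :
    Module.finrank ℝ (W.map f) + Module.finrank ℝ ↥(W ⊓ LinearMap.ker f) =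
      Module.finrank ℝ W := by
  have h := LinearMap.finrank_range_add_finrank_ker (f.domRestrict W)
  rw [LinearMap.range_domRestrict, LinearMap.ker_domRestrict] at h
  rw [← h, ← Submodule.map_comap_subtype W (LinearMap.ker f),
    Submodule.finrank_map_subtype_eq]

end Aux

/-- For psd `A, B`:
`rank B = rank (√A·B·√A) + dim (range B ∩ ker A)`. -/
theorem stmt5 {n : ℕ} (A B : Matrix (Fin n) (Fin n) ℝ)
    (hA : A.PosSemidef) (hB : B.PosSemidef) :
    B.rank = (psdSqrt A * B * psdSqrt A).rank +
      Module.finrank ℝ ↥(LinearMap.range B.mulVecLin ⊓ LinearMap.ker A.mulVecLin) := by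
  have hpsd : psdSqrt A = psdSqrt A := rfl
  set S := psdSqrt A with hSdef
  set C := psdSqrt B with hCdef
  have hS := psdSqrt_posSemidef hA
  have hC := psdSqrt_posSemidef hB
  have hSS : S * S = A := psdSqrt_mul_self hA
  have hCC : C * C = B := psdSqrt_mul_self hB
  have hkerS : LinearMap.ker S.mulVecLin = LinearMap.ker A.mulVecLin := by
    rw [← hSS]; exact (ker_sq_psd hS).symm
  have hkerC : LinearMap.ker C.mulVecLin = LinearMap.ker B.mulVecLin := by
    rw [← hCC]; exact (ker_sq_psd hC).symm
  have hle : LinearMap.range B.mulVecLin ≤ LinearMap.range C.mulVecLin := by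
    rw [← hCC, mulVecLin_mul]
    exact LinearMap.range_comp_le_range _ _
  have hrangeC : LinearMap.range C.mulVecLin = LinearMap.range B.mulVecLin := by
    refine (Submodule.eq_of_le_of_finrank_le hle ?_).symm
    have h1 := LinearMap.finrank_range_add_finrank_ker C.mulVecLin
    have h2 := LinearMap.finrank_range_add_finrank_ker B.mulVecLin
    rw [hkerC] at h1
    omega
  have hfac : S * B * S = (S * C) * (S * C)ᵀ := by
    rw [transpose_mul, transpose_eq_of_psd hS, transpose_eq_of_psd hC]
    conv_lhs => rw [← hCC]
    noncomm_ring
  have hrank : (S * B * S).rank = (S * C).rank := by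
    rw [hfac, rank_self_mul_transpose]
  have hSC : (S * C).rank =
      Module.finrank ℝ ((LinearMap.range B.mulVecLin).map S.mulVecLin) := by
    rw [Matrix.rank, mulVecLin_mul, LinearMap.range_comp, hrangeC]
  have key := finrank_map_add_inf_ker S.mulVecLin (LinearMap.range B.mulVecLin)
  rw [hkerS] at key
  rw [hpsd, hrank, hSC, Matrix.rank, key]
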